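/- For n ≥ 1, the number of involutions of [n] that I-avoid the pattern 132 equals the sum over k from 0 to ⌊n/2⌋ of C(n−k, k)·k!. -/

import Mathlib

open Finset

namespace IAvoid132

variable {n : ℕ}

def P (τ : Equiv.Perm (Fin n)) : Prop :=
  Function.Involutive ⇑τ ∧
  (∀ a c : Fin n, a < τ a → c < τ c → ¬ τ a < c) ∧
  (∀ f a : Fin n, τ f = f → a < τ a → a < f)

noncomputable def cnt (τ : Equiv.Perm (Fin n)) : ℕ :=
  (Finset.univ.filter fun a => a < τ a).card

lemma card_filter_val_lt (k : ℕ) (hk : k ≤ n) :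
    (Finset.univ.filter fun a : Fin n => a.val < k).card = k := by
  rw [← Finset.card_range k]
  apply Finset.card_bij (fun a _ => a.val)
  · intro a ha; simp only [mem_filter, mem_univ, true_and] at ha; simpa using ha
  · intro a _ b _ h; exact Fin.ext h
  · intro b hb
    simp only [mem_range] at hb
    exact ⟨⟨b, lt_of_lt_of_le hb hk⟩, by simp [hb], rfl⟩

lemma lower (τ : Equiv.Perm (Fin n)) (hP : P τ) {a b : Fin n} (hb : b < a)
    (ha : a < τ a) : b < τ b := by
  obtain ⟨hinv, h1, h2⟩ := hP
  rcases lt_trichotomy b (τ b) with h | h | h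
  · exact h
  · exact absurd (h2 b a h.symm ha) (not_lt.mpr hb.le)
  · have hl : τ b < τ (τ b) := by rw [hinv]; exact h
    have := h1 (τ b) a hl ha
    rw [hinv] at this
    exact absurd hb this

lemma mem_L_iff (τ : Equiv.Perm (Fin n)) (hP : P τ) (a : Fin n) :
    a < τ a ↔ a.val < cnt τ := by
  constructor
  · intro ha
    have hsub : (Finset.univ.filter fun b : Fin n => b.val < a.val + 1) ⊆
        (Finset.univ.filter fun b => b < τ b) := by
      intro b hb
      simp only [mem_filter, mem_univ, true_and] at hb ⊢
      rcases lt_or_eq_of_le (Nat.lt_succ_iff.mp hb) with h | h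
      · exact lower τ hP (Fin.lt_def.mpr h) ha
      · rwa [Fin.ext h]
    have := Finset.card_le_card hsub
    rw [card_filter_val_lt (a.val + 1) a.isLt] at this
    exact this
  · intro ha
    by_contra hna
    have hsub : (Finset.univ.filter fun b : Fin n => b < τ b) ⊆
        (Finset.univ.filter fun b : Fin n => b.val < a.val) := by
      intro b hb
      simp only [mem_filter, mem_univ, true_and] at hb ⊢
      by_contra hba
      rcases lt_or_eq_of_le (not_lt.mp hba) with h | h
      · exact hna (lower τ hP (Fin.lt_def.mpr h) hb)
      · exact hna (by rw [show a = b from Fin.ext h]; exact hb)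
    have := Finset.card_le_card hsub
    rw [card_filter_val_lt a.val a.isLt.le] at this
    have : cnt τ ≤ a.val := this
    omega

lemma right_ge (τ : Equiv.Perm (Fin n)) (hP : P τ) {a : Fin n} (ha : a.val < cnt τ) :
    cnt τ ≤ (τ a).val := by
  have hla : a < τ a := (mem_L_iff τ hP a).mpr ha
  by_contra h
  have : τ a < τ (τ a) := (mem_L_iff τ hP (τ a)).mpr (not_le.mp h)
  rw [hP.1 a] at this
  exact absurd hla (asymm this)

lemma cnt_le (τ : Equiv.Perm (Fin n)) (hP : P τ) : 2 * cnt τ ≤ n := by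
  classical
  set L := Finset.univ.filter fun a : Fin n => a < τ a with hL
  have hdisj : Disjoint L (L.image τ) := by
    rw [Finset.disjoint_left]
    intro x hx hx2
    simp only [hL, mem_filter, mem_univ, true_and, mem_image] at hx hx2
    obtain ⟨b, hb, hbx⟩ := hx2
    have hτx : τ x = b := by rw [← hbx, hP.1]
    rw [hτx] at hx
    rw [hbx] at hb
    exact absurd hx (asymm hb)
  have hcardim : (L.image τ).card = L.card :=
    Finset.card_image_of_injective _ τ.injective
  have := Finset.card_le_univ (L ∪ L.image τ)
  rw [Finset.card_union_of_disjoint hdisj, hcardim, Fintype.card_fin] at this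
  simpa [cnt, two_mul] using this

/-- forward map: the embedding associated to an involution with `cnt τ = k`. -/
def Fw (τ : Equiv.Perm (Fin n)) (k : ℕ) (hP : P τ) (hcnt : cnt τ = k) :
    Fin k ↪ Fin (n - k) :=
  { toFun := fun i =>
      ⟨(τ ⟨i.val, lt_of_lt_of_le i.isLt (by have := cnt_le τ hP; omega)⟩).val - k, by
        have h1 := right_ge τ hP (a := ⟨i.val, lt_of_lt_of_le i.isLt
          (by have := cnt_le τ hP; omega)⟩) (by simpa [hcnt] using i.isLt)
        have h2 := (τ ⟨i.val, lt_of_lt_of_le i.isLt (by have := cnt_le τ hP; omega)⟩).isLt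
        omega⟩
    inj' := by
      intro i j hij
      have hkn : k ≤ n := by have := cnt_le τ hP; omega
      simp only [Fin.mk.injEq] at hij
      have hi := right_ge τ hP (a := ⟨i.val, lt_of_lt_of_le i.isLt hkn⟩)
        (by simpa [hcnt] using i.isLt)
      have hj := right_ge τ hP (a := ⟨j.val, lt_of_lt_of_le j.isLt hkn⟩)
        (by simpa [hcnt] using j.isLt)
      rw [hcnt] at hi hj
      have hval : (τ ⟨i.val, lt_of_lt_of_le i.isLt hkn⟩).val
          = (τ ⟨j.val, lt_of_lt_of_le j.isLt hkn⟩).val := by omega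
      have := τ.injective (Fin.ext hval)
      simpa [Fin.ext_iff] using this }

/-- inverse map: the function underlying the involution built from an embedding. -/
noncomputable def gfun (k : ℕ) (hk : 2 * k ≤ n) (f : Fin k ↪ Fin (n - k)) (x : Fin n) : Fin n :=
  if h : x.val < k then
    ⟨k + (f ⟨x.val, h⟩).val, by have := (f ⟨x.val, h⟩).isLt; omega⟩
  else if h2 : ∃ i : Fin k, k + (f i).val = x.val then
    ⟨(Classical.choose h2).val, by have := (Classical.choose h2).isLt; omega⟩
  else x

variable {k : ℕ} (hk : 2 * k ≤ n) (f : Fin k ↪ Fin (n - k))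

lemma gfun_val_of_lt {x : Fin n} (hx : x.val < k) :
    (gfun k hk f x).val = k + (f ⟨x.val, hx⟩).val := by
  rw [gfun, dif_pos hx]

lemma gfun_val_of_ex {x : Fin n} (i : Fin k) (hix : k + (f i).val = x.val) :
    (gfun k hk f x).val = i.val := by
  have hx : ¬ x.val < k := by omega
  have h2 : ∃ j : Fin k, k + (f j).val = x.val := ⟨i, hix⟩
  rw [gfun, dif_neg hx, dif_pos h2]
  have hspec := Classical.choose_spec h2
  have hfe : f (Classical.choose h2) = f i := Fin.ext (by omega)
  simpa using congrArg Fin.val (f.injective hfe)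

lemma gfun_of_not {x : Fin n} (hx : ¬ x.val < k)
    (h2 : ¬ ∃ i : Fin k, k + (f i).val = x.val) : gfun k hk f x = x := by
  rw [gfun, dif_neg hx, dif_neg h2]

lemma gfun_invol : Function.Involutive (gfun k hk f) := by
  intro x
  by_cases hx : x.val < k
  · have h1 := gfun_val_of_lt hk f hx
    have h2 := gfun_val_of_ex hk f (x := gfun k hk f x) ⟨x.val, hx⟩ h1.symm
    exact Fin.ext h2
  · by_cases h2 : ∃ i : Fin k, k + (f i).val = x.val
    · obtain ⟨i, hi⟩ := h2
      have h1 : (gfun k hk f x).val = i.val := gfun_val_of_ex hk f i hi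
      have hlt : (gfun k hk f x).val < k := h1 ▸ i.isLt
      have h3 := gfun_val_of_lt hk f (x := gfun k hk f x) hlt
      have : (⟨(gfun k hk f x).val, hlt⟩ : Fin k) = i := Fin.ext h1
      rw [this] at h3
      exact Fin.ext (by omega)
    · rw [gfun_of_not hk f hx h2, gfun_of_not hk f hx h2]

noncomputable def Gperm : Equiv.Perm (Fin n) :=
  Function.Involutive.toPerm _ (gfun_invol hk f)

lemma Gperm_apply (x : Fin n) : Gperm hk f x = gfun k hk f x := rfl

lemma lt_gfun_iff (a : Fin n) : a < gfun k hk f a ↔ a.val < k := by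
  constructor
  · intro h
    by_contra hak
    by_cases h2 : ∃ i : Fin k, k + (f i).val = a.val
    · obtain ⟨i, hi⟩ := h2
      have := gfun_val_of_ex hk f i hi
      have := i.isLt
      rw [Fin.lt_def] at h
      omega
    · rw [gfun_of_not hk f hak h2] at h
      exact lt_irrefl _ h
  · intro ha
    have := gfun_val_of_lt hk f ha
    rw [Fin.lt_def]
    omega

lemma Gperm_P : P (Gperm hk f) := by
  refine ⟨gfun_invol hk f, ?_, ?_⟩
  · intro a c ha hc
    rw [Gperm_apply] at *
    rw [lt_gfun_iff] at ha hc
    have := gfun_val_of_lt hk f ha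
    rw [Fin.lt_def]
    omega
  · intro f0 a hf0 ha
    rw [Gperm_apply] at *
    rw [lt_gfun_iff] at ha
    have hf0k : ¬ f0.val < k := by
      intro h
      have := gfun_val_of_lt hk f h
      rw [hf0] at this
      omega
    rw [Fin.lt_def]
    omega

lemma Gperm_cnt : cnt (Gperm hk f) = k := by
  classical
  have : (Finset.univ.filter fun a : Fin n => a < Gperm hk f a)
      = Finset.univ.filter fun a : Fin n => a.val < k := by
    apply Finset.filter_congr
    intro a _
    rw [Gperm_apply]
    exact lt_gfun_iff hk f a
  rw [cnt, this, card_filter_val_lt k (by omega)]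

lemma left_inv (τ : Equiv.Perm (Fin n)) (hP : P τ) (hcnt : cnt τ = k) :
    Gperm hk (Fw τ k hP hcnt) = τ := by
  have hkn : k ≤ n := by omega
  ext x
  rw [Gperm_apply]
  by_cases hx : x.val < k
  · have h1 := gfun_val_of_lt hk (Fw τ k hP hcnt) hx
    have hge : k ≤ (τ x).val := by
      have := right_ge τ hP (a := x) (by omega)
      omega
    have h2 : ((Fw τ k hP hcnt) ⟨x.val, hx⟩).val
        = (τ ⟨x.val, lt_of_lt_of_le hx hkn⟩).val - k := rfl
    have hxe : τ (⟨x.val, lt_of_lt_of_le hx hkn⟩ : Fin n) = τ x :=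
      congrArg τ (Fin.ext rfl)
    rw [hxe] at h2
    omega
  · by_cases hτx : (τ x).val < k
    · have h2 : ((Fw τ k hP hcnt) ⟨(τ x).val, hτx⟩).val
          = (τ ⟨(τ x).val, lt_of_lt_of_le hτx hkn⟩).val - k := rfl
      have hxe : τ (⟨(τ x).val, lt_of_lt_of_le hτx hkn⟩ : Fin n) = τ (τ x) :=
        congrArg τ (Fin.ext rfl)
      rw [hxe, hP.1] at h2
      have hix : k + ((Fw τ k hP hcnt) ⟨(τ x).val, hτx⟩).val = x.val := by omega
      have h3 := gfun_val_of_ex hk (Fw τ k hP hcnt) ⟨(τ x).val, hτx⟩ hix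
      have h4 : ((⟨(τ x).val, hτx⟩ : Fin k)).val = (τ x).val := rfl
      omega
    · have hfix : τ x = x := by
        have hnl : ¬ x < τ x := by
          rw [mem_L_iff τ hP, hcnt]; omega
        have hnr : ¬ τ x < x := by
          intro h
          have : τ x < τ (τ x) := by rw [hP.1]; exact h
          rw [mem_L_iff τ hP, hcnt] at this
          omega
        rw [Fin.lt_def] at hnl hnr
        exact Fin.ext (by omega)
      have h2 : ¬ ∃ i : Fin k, k + ((Fw τ k hP hcnt) i).val = x.val := by
        rintro ⟨i, hi⟩
        rw [Fw] at hi
        change k + ((τ ⟨i.val, lt_of_lt_of_le i.isLt hkn⟩).val - k) = x.val at hi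
        have hge : k ≤ (τ ⟨i.val, lt_of_lt_of_le i.isLt hkn⟩).val := by
          have := right_ge τ hP (a := ⟨i.val, lt_of_lt_of_le i.isLt hkn⟩)
            (by rw [hcnt]; exact i.isLt)
          omega
        have hτeq : τ ⟨i.val, lt_of_lt_of_le i.isLt hkn⟩ = x := Fin.ext (by omega)
        have : (⟨i.val, lt_of_lt_of_le i.isLt hkn⟩ : Fin n) = τ x := by
          rw [← hτeq, hP.1]
        rw [hfix] at this
        have : i.val = x.val := congrArg Fin.val this
        omega
      rw [gfun_of_not hk _ hx h2, hfix]

lemma right_inv (hP : P (Gperm hk f)) (hcnt : cnt (Gperm hk f) = k) :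
    Fw (Gperm hk f) k hP hcnt = f := by
  have hkn : k ≤ n := by omega
  ext i
  rw [Fw]
  change (Gperm hk f ⟨i.val, lt_of_lt_of_le i.isLt hkn⟩).val - k = (f i).val
  have hx : (⟨i.val, lt_of_lt_of_le i.isLt hkn⟩ : Fin n).val < k := i.isLt
  have h1 : (Gperm hk f ⟨i.val, lt_of_lt_of_le i.isLt hkn⟩).val
      = k + (f ⟨i.val, hx⟩).val := gfun_val_of_lt hk f hx
  have : (⟨i.val, hx⟩ : Fin k) = i := Fin.ext rfl
  rw [this] at h1
  omega

end IAvoid132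

/-- For `n ≥ 1`, the number of involutions of `[n]` that I-avoid 132 — equivalently
(as characterized in the paper) those whose 2-cycles form a permutational matching
(no two independent 2-cycles) and all of whose fixed points are greater than every
left endpoint of a 2-cycle — equals `Σ_{k=0}^{⌊n/2⌋} C(n−k,k)·k!`. -/
theorem involutions_Iavoiding_132_card (n : ℕ) (hn : 1 ≤ n) :
    Nat.card {τ : Equiv.Perm (Fin n) // Function.Involutive ⇑τ ∧
      (∀ a c : Fin n, a < τ a → c < τ c → ¬ τ a < c) ∧
      (∀ f a : Fin n, τ f = f → a < τ a → a < f)} =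
    ∑ k ∈ Finset.range (n / 2 + 1), Nat.choose (n - k) k * Nat.factorial k := by
  classical
  open IAvoid132 in
  have h0 : Nat.card {τ : Equiv.Perm (Fin n) // IAvoid132.P τ} =
      (Finset.univ.filter fun τ : Equiv.Perm (Fin n) => IAvoid132.P τ).card := by
    rw [Nat.card_eq_fintype_card, Fintype.card_subtype]
  rw [show {τ : Equiv.Perm (Fin n) // Function.Involutive ⇑τ ∧
      (∀ a c : Fin n, a < τ a → c < τ c → ¬ τ a < c) ∧
      (∀ f a : Fin n, τ f = f → a < τ a → a < f)} =
      {τ : Equiv.Perm (Fin n) // IAvoid132.P τ} from rfl, h0]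
  rw [Finset.card_eq_sum_card_fiberwise (f := IAvoid132.cnt)
    (t := Finset.range (n / 2 + 1)) (fun τ hτ => by
      simp only [Finset.mem_coe, Finset.mem_filter, Finset.mem_univ, true_and] at hτ
      simp only [Finset.mem_coe, Finset.mem_range]
      have := IAvoid132.cnt_le τ hτ
      omega)]
  apply Finset.sum_congr rfl
  intro k hkmem
  simp only [Finset.mem_range] at hkmem
  have hk : 2 * k ≤ n := by omega
  have hcard : ((Finset.univ.filter fun τ : Equiv.Perm (Fin n) => IAvoid132.P τ).filter
      fun τ => IAvoid132.cnt τ = k).card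
      = (Finset.univ : Finset (Fin k ↪ Fin (n - k))).card := by
    refine Finset.card_bij'
      (fun τ hτ => IAvoid132.Fw τ k
        (Finset.mem_filter.mp (Finset.mem_filter.mp hτ).1).2
        (Finset.mem_filter.mp hτ).2)
      (fun f _ => IAvoid132.Gperm hk f) ?_ ?_ ?_ ?_
    · intro τ hτ; exact Finset.mem_univ _
    · intro f _
      exact Finset.mem_filter.mpr ⟨Finset.mem_filter.mpr
        ⟨Finset.mem_univ _, IAvoid132.Gperm_P hk f⟩, IAvoid132.Gperm_cnt hk f⟩
    · intro τ hτ
      exact IAvoid132.left_inv hk τ _ _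
    · intro f _
      exact IAvoid132.right_inv hk f _ _
  rw [hcard, Finset.card_univ, Fintype.card_embedding_eq, Fintype.card_fin,
    Fintype.card_fin, Nat.descFactorial_eq_factorial_mul_choose, Nat.mul_comm]
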